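/- Let r be a strictly positive C¹ function on (0, c₀] with liminf_{s→0⁺} r(s) > 0 and lim_{s→0⁺} s r'(s)/r(s) = 0. Then there is a constant C₂ > 0 such that for all δ > 0 and all ζ ∈ (0, c₀), the second derivative of Φ_δ(ζ) = exp(∫₀^ζ ds/(s r(s)+δ)) satisfies Φ_δ''(ζ) ≤ C₂ Φ_δ(ζ) r(ζ) / (ζ r(ζ) + δ)². -/

import Mathlib

open MeasureTheory Set Filter

theorem stmt_6 (c₀ : ℝ) (hc₀ : 0 < c₀) (r : ℝ → ℝ)
    (hrpos : ∀ s ∈ Ioc (0:ℝ) c₀, 0 < r s)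
    (hrC1 : ContDiffOn ℝ 1 r (Ioc 0 c₀))
    (hliminf : 0 < Filter.liminf r (nhdsWithin 0 (Ioi 0)))
    (hratio : Tendsto (fun s => s * deriv r s / r s) (nhdsWithin 0 (Ioi 0)) (nhds 0)) :
    ∃ C₂ > (0:ℝ), ∀ δ > (0:ℝ), ∀ ζ ∈ Ioo (0:ℝ) c₀,
      deriv (deriv (fun z => Real.exp (∫ s in Ioc (0:ℝ) z, 1 / (s * r s + δ)))) ζ
        ≤ C₂ * Real.exp (∫ s in Ioc (0:ℝ) ζ, 1 / (s * r s + δ)) * r ζ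
            / (ζ * r ζ + δ) ^ 2 := by
  have hrc : ContinuousOn r (Ioc 0 c₀) := hrC1.continuousOn
  -- Step 1: the numerator bound
  obtain ⟨C₂, hC₂pos, hbound⟩ :
      ∃ C₂ > (0:ℝ), ∀ ζ ∈ Ioo (0:ℝ) c₀, 1 - r ζ - ζ * deriv r ζ ≤ C₂ * r ζ := by
    set L := Filter.liminf r (nhdsWithin 0 (Ioi 0)) with hLdef
    have hmemIoc : Ioc (0:ℝ) c₀ ∈ nhdsWithin 0 (Ioi 0) :=
      Ioc_mem_nhdsGT_of_mem ⟨le_rfl, hc₀⟩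
    have hbd : (nhdsWithin (0:ℝ) (Ioi 0)).IsBoundedUnder (· ≥ ·) r :=
      isBoundedUnder_of_eventually_ge
        (eventually_iff_exists_mem.mpr ⟨_, hmemIoc, fun s hs => (hrpos s hs).le⟩)
    have h2 : ∀ᶠ s in nhdsWithin (0:ℝ) (Ioi 0), L / 2 < r s :=
      eventually_lt_of_lt_liminf (by linarith) hbd
    have h3 : ∀ᶠ s in nhdsWithin (0:ℝ) (Ioi 0), |s * deriv r s / r s| < 1 := by
      have h := hratio (Metric.ball_mem_nhds (0:ℝ) one_pos)
      rw [Filter.mem_map] at h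
      refine Filter.eventually_iff.mpr (Filter.mem_of_superset h ?_)
      intro s hs
      simpa only [mem_preimage, mem_setOf_eq, Metric.mem_ball, Real.dist_eq, sub_zero] using hs
    have hall := h2.and h3
    rw [Filter.eventually_iff, mem_nhdsGT_iff_exists_Ioc_subset] at hall
    obtain ⟨u, hu, hsub⟩ := hall
    set ε := min u c₀ with hεdef
    have hε0 : 0 < ε := lt_min hu hc₀
    have hεc : ε ≤ c₀ := min_le_right _ _
    -- compact part
    set ψ := fun z => (1 - r z - z * derivWithin r (Ioc 0 c₀) z) / r z with hψdef
    have hdc : ContinuousOn (derivWithin r (Ioc 0 c₀)) (Ioc 0 c₀) :=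
      hrC1.continuousOn_derivWithin (uniqueDiffOn_Ioc 0 c₀) le_rfl
    have hψc : ContinuousOn ψ (Ioc 0 c₀) :=
      (((continuousOn_const.sub hrc).sub (continuousOn_id.mul hdc))).div hrc
        fun z hz => (hrpos z hz).ne'
    have hIcc : Icc ε c₀ ⊆ Ioc 0 c₀ := fun z hz => ⟨lt_of_lt_of_le hε0 hz.1, hz.2⟩
    obtain ⟨x, hx, hmax⟩ :=
      isCompact_Icc.exists_isMaxOn (nonempty_Icc.mpr hεc) (hψc.mono hIcc)
    refine ⟨max (2 / L + 1) (max (ψ x) 1), lt_of_lt_of_le one_pos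
      (le_max_of_le_right (le_max_right _ _)), ?_⟩
    intro ζ hζ
    have hζIoc : ζ ∈ Ioc 0 c₀ := ⟨hζ.1, hζ.2.le⟩
    have hrζ : 0 < r ζ := hrpos ζ hζIoc
    by_cases hcase : ζ < ε
    · have hζu : ζ ∈ Ioc 0 u := ⟨hζ.1, le_of_lt (lt_of_lt_of_le hcase (min_le_left _ _))⟩
      obtain ⟨h2ζ, h3ζ⟩ := hsub hζu
      have h1 : -(r ζ) < ζ * deriv r ζ := by
        have habs := (abs_lt.mp h3ζ).1
        rw [lt_div_iff₀ hrζ] at habs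
        linarith
      have hL : 0 < L := hliminf
      have h2' : 1 < 2 / L * r ζ := by
        have heq : 2 / L * (L / 2) = 1 := by field_simp
        calc (1:ℝ) = 2 / L * (L / 2) := heq.symm
          _ < 2 / L * r ζ := by
            exact mul_lt_mul_of_pos_left h2ζ (div_pos two_pos hL)
      have hle : 2 / L + 1 ≤ max (2 / L + 1) (max (ψ x) 1) := le_max_left _ _
      nlinarith [mul_le_mul_of_nonneg_right hle hrζ.le]
    · push_neg at hcase
      have hd : derivWithin r (Ioc 0 c₀) ζ = deriv r ζ :=
        derivWithin_of_mem_nhds (Ioc_mem_nhds hζ.1 hζ.2)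
      have hψζ : ψ ζ ≤ ψ x := hmax ⟨hcase, hζ.2.le⟩
      have hψx : ψ x ≤ max (2 / L + 1) (max (ψ x) 1) :=
        le_max_of_le_right (le_max_left _ _)
      have : (1 - r ζ - ζ * deriv r ζ) / r ζ ≤ max (2 / L + 1) (max (ψ x) 1) := by
        rw [← hd]; exact le_trans hψζ hψx
      rw [div_le_iff₀ hrζ] at this
      linarith
  refine ⟨C₂, hC₂pos, ?_⟩
  intro δ hδ ζ hζ
  have hζIoc : ζ ∈ Ioc 0 c₀ := ⟨hζ.1, hζ.2.le⟩
  set g : ℝ → ℝ := fun s => 1 / (s * r s + δ) with hgdef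
  set F : ℝ → ℝ := fun z => ∫ s in Ioc (0:ℝ) z, g s with hFdef
  have hpos : ∀ z ∈ Ioc (0:ℝ) c₀, 0 < z * r z + δ := fun z hz =>
    add_pos (mul_pos hz.1 (hrpos z hz)) hδ
  have hconth : ContinuousOn (fun z => z * r z + δ) (Ioc 0 c₀) :=
    (continuousOn_id.mul hrc).add continuousOn_const
  have hcontg : ContinuousOn g (Ioc 0 c₀) :=
    continuousOn_const.div hconth fun z hz => (hpos z hz).ne'
  have hint : ∀ z, z ≤ c₀ → IntegrableOn g (Ioc 0 z) := by
    intro z hz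
    have hsub : Ioc (0:ℝ) z ⊆ Ioc 0 c₀ := Ioc_subset_Ioc le_rfl hz
    refine ⟨(hcontg.mono hsub).aestronglyMeasurable measurableSet_Ioc, ?_⟩
    refine HasFiniteIntegral.restrict_of_bounded (C := 1 / δ) measure_Ioc_lt_top ?_
    refine (ae_restrict_iff' measurableSet_Ioc).2 (ae_of_all _ fun s hs => ?_)
    have hs' := hsub hs
    have h1 : 0 < s * r s + δ := hpos s hs'
    have h2 : δ ≤ s * r s + δ := le_add_of_nonneg_left
      (mul_nonneg hs'.1.le (hrpos s hs').le)
    rw [Real.norm_eq_abs, hgdef]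
    rw [abs_of_pos (by positivity)]
    exact one_div_le_one_div_of_le hδ h2
  have hF : ∀ x ∈ Ioo (0:ℝ) c₀, HasDerivAt F (g x) x := by
    intro x hx
    set a := x / 2 with hadef
    have ha0 : 0 < a := hadef ▸ half_pos hx.1
    have hax : a < x := hadef ▸ half_lt_self hx.1
    have hmem : Ioc (0:ℝ) c₀ ∈ nhds x := Ioc_mem_nhds hx.1 hx.2
    have hderiv : HasDerivAt (fun z => ∫ t in a..z, g t) (g x) x := by
      apply intervalIntegral.integral_hasDerivAt_right
      · rw [intervalIntegrable_iff_integrableOn_Ioc_of_le hax.le]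
        exact (hint x hx.2.le).mono_set (Ioc_subset_Ioc_left ha0.le)
      · exact ⟨Ioc 0 c₀, hmem, hcontg.aestronglyMeasurable measurableSet_Ioc⟩
      · exact hcontg.continuousAt hmem
    have heq : (fun z => (∫ s in Ioc (0:ℝ) a, g s) + ∫ t in a..z, g t) =ᶠ[nhds x] F := by
      filter_upwards [Ioo_mem_nhds hax hx.2] with z hz
      rw [intervalIntegral.integral_of_le hz.1.le]
      have hun : Ioc (0:ℝ) a ∪ Ioc a z = Ioc 0 z := Ioc_union_Ioc_eq_Ioc ha0.le hz.1.le
      have := setIntegral_union (Set.Ioc_disjoint_Ioc_of_le le_rfl) measurableSet_Ioc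
        (hint a (by linarith [hx.2])) ((hint z hz.2.le).mono_set (Ioc_subset_Ioc_left ha0.le))
        (f := g) (μ := volume)
      rw [hFdef]
      simp only [← hun, this]
    exact ((hderiv.const_add _).congr_of_eventuallyEq heq.symm)
  have hΦ : ∀ x ∈ Ioo (0:ℝ) c₀, HasDerivAt (fun z => Real.exp (F z))
      (Real.exp (F x) * g x) x := fun x hx => (hF x hx).exp
  have hev : deriv (fun z => Real.exp (F z)) =ᶠ[nhds ζ] fun z => Real.exp (F z) * g z := by
    filter_upwards [Ioo_mem_nhds hζ.1 hζ.2] with z hz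
    exact (hΦ z hz).deriv
  have hddeq : deriv (deriv (fun z => Real.exp (F z))) ζ
      = deriv (fun z => Real.exp (F z) * g z) ζ := hev.deriv_eq
  -- derivative of g
  have hmem : Ioc (0:ℝ) c₀ ∈ nhds ζ := Ioc_mem_nhds hζ.1 hζ.2
  have hr' : HasDerivAt r (deriv r ζ) ζ :=
    ((hrC1.contDiffAt hmem).differentiableAt one_ne_zero).hasDerivAt
  have hh : HasDerivAt (fun z => z * r z + δ) (1 * r ζ + ζ * deriv r ζ) ζ :=
    ((hasDerivAt_id ζ).mul hr').add_const δ
  have hne : ζ * r ζ + δ ≠ 0 := (hpos ζ hζIoc).ne'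
  have hg' : HasDerivAt g (-(1 * r ζ + ζ * deriv r ζ) / (ζ * r ζ + δ) ^ 2) ζ := by
    have := hh.inv hne
    simpa [hgdef, one_div, Pi.inv_def] using this
  have hmul : HasDerivAt (fun z => Real.exp (F z) * g z)
      (Real.exp (F ζ) * g ζ * g ζ
        + Real.exp (F ζ) * (-(1 * r ζ + ζ * deriv r ζ) / (ζ * r ζ + δ) ^ 2)) ζ :=
    (hΦ ζ hζ).mul hg'
  have hval : deriv (fun z => Real.exp (F z) * g z) ζ
      = Real.exp (F ζ) * (1 - r ζ - ζ * deriv r ζ) / (ζ * r ζ + δ) ^ 2 := by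
    rw [hmul.deriv, hgdef]
    field_simp
    ring
  rw [hddeq, hval]
  rw [div_le_div_iff₀ (by positivity) (by positivity)]
  have hE := (Real.exp_pos (F ζ)).le
  nlinarith [mul_le_mul_of_nonneg_left (hbound ζ hζ) hE,
    sq_nonneg (ζ * r ζ + δ), pow_pos (hpos ζ hζIoc) 2]
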